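/- Let G be a nontrivial finite group. Then the Jordan constant of the wreath-type group (G × G) ⋊ ℤ/2ℤ, where the nontrivial element of ℤ/2ℤ acts by swapping the two factors, equals 2·J(G)². -/

import Mathlib

/-- The factor-swapping automorphism of G × G. -/
def swapAut (G : Type*) [Group G] : MulAut (G × G) := (MulEquiv.prodComm : (G × G) ≃* (G × G))

theorem swapAut_sq (G : Type*) [Group G] : swapAut G ^ 2 = 1 := by
  ext x <;> simp [swapAut, pow_succ]

/-- The action of ℤ/2ℤ on G × G where the nontrivial element swaps the factors. -/
def swapAction (G : Type*) [Group G] : Multiplicative (ZMod 2) →* MulAut (G × G) :=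
  MonoidHom.mk' (fun z => swapAut G ^ (Multiplicative.toAdd z).val)
    (fun z w => by
      simp only [toAdd_mul, ZMod.val_add]
      rw [← pow_eq_pow_mod _ (swapAut_sq G), pow_add])

/-- The Jordan constant of a (finite) group: the least index of a normal abelian
subgroup. -/
noncomputable def jordanConstant (G : Type*) [Group G] : ℕ :=
  sInf {k | ∃ A : Subgroup G, A.Normal ∧ IsMulCommutative A ∧ A.index = k}

section Aux

open SemidirectProduct

lemma sdp_conj {N G : Type*} [Group N] [Group G] (φ : G →* MulAut N)
    (w : N ⋊[φ] G) (x : N) :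
    w * inl x * w⁻¹ = inl (w.left * φ w.right x * w.left⁻¹) := by
  ext <;> simp [mul_assoc]

lemma sdp_finite {N G : Type*} [Group N] [Group G] (φ : G →* MulAut N) [Finite N] [Finite G] :
    Finite (N ⋊[φ] G) :=
  Finite.of_injective (fun w => (w.left, w.right)) (fun a b h => by
    cases a; cases b; simp_all)

lemma bot_isComm (G : Type*) [Group G] : IsMulCommutative (⊥ : Subgroup G) :=
  ⟨⟨fun a b => Subtype.ext (by
    have ha := a.2; have hb := b.2
    simp only [Subgroup.mem_bot] at ha hb
    simp [ha, hb])⟩⟩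

lemma jordan_mem (G : Type*) [Group G] :
    ∃ A : Subgroup G, A.Normal ∧ IsMulCommutative A ∧ A.index = jordanConstant G := by
  have hne : {k | ∃ A : Subgroup G, A.Normal ∧ IsMulCommutative A ∧ A.index = k}.Nonempty :=
    ⟨(⊥ : Subgroup G).index, ⟨⊥, inferInstance, bot_isComm G, rfl⟩⟩
  exact Nat.sInf_mem hne

lemma jordan_le {G : Type*} [Group G] (A : Subgroup G) (hn : A.Normal)
    (hc : IsMulCommutative A) : jordanConstant G ≤ A.index :=
  Nat.sInf_le ⟨A, hn, hc, rfl⟩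

lemma jordan_pos (G : Type*) [Group G] [Finite G] : 0 < jordanConstant G := by
  obtain ⟨A, _, _, h⟩ := jordan_mem G
  rw [← h]
  exact Nat.pos_of_ne_zero A.index_ne_zero_of_finite

lemma prod_isComm {G H : Type*} [Group G] [Group H] (A : Subgroup G) (B : Subgroup H)
    (hA : IsMulCommutative A) (hB : IsMulCommutative B) : IsMulCommutative (A.prod B) := by
  haveI := hA; haveI := hB
  exact ⟨⟨fun x y => Subtype.ext (Prod.ext
    (A.mul_comm_of_mem_isMulCommutative x.2.1 y.2.1)
    (B.mul_comm_of_mem_isMulCommutative x.2.2 y.2.2))⟩⟩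

variable (G : Type*) [Group G]

lemma swapAction_cases (z : Multiplicative (ZMod 2)) (x : G × G) :
    swapAction G z x = x ∨ swapAction G z x = (x.2, x.1) := by
  have hv : (Multiplicative.toAdd z).val = 0 ∨ (Multiplicative.toAdd z).val = 1 := by
    have := ZMod.val_lt (Multiplicative.toAdd z)
    omega
  rcases hv with h | h
  · left; simp [swapAction, h]
  · right; simp [swapAction, h, swapAut, Prod.swap]

lemma swapAction_ne (z : Multiplicative (ZMod 2)) (hz : z ≠ 1) :
    swapAction G z = swapAut G := by
  have h0 : Multiplicative.toAdd z ≠ 0 := by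
    intro h; exact hz (by rw [← ofAdd_toAdd z, h, ofAdd_zero])
  have hv : (Multiplicative.toAdd z).val = 1 := by
    have h1 := ZMod.val_lt (Multiplicative.toAdd z)
    have h2 : (Multiplicative.toAdd z).val ≠ 0 := by
      intro h; exact h0 ((ZMod.val_eq_zero _).mp h)
    omega
  show swapAut G ^ (Multiplicative.toAdd z).val = swapAut G
  rw [hv, pow_one]

lemma index_range_inl [Finite G] :
    (inl : (G × G) →* (G × G) ⋊[swapAction G] Multiplicative (ZMod 2)).range.index = 2 := by
  rw [range_inl_eq_ker_rightHom, Subgroup.index_ker,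
    MonoidHom.range_eq_top_of_surjective _ rightHom_surjective]
  simp only [Subgroup.card_top]
  simp

lemma index_map_inl [Finite G] (S : Subgroup (G × G)) :
    (S.map (inl : (G × G) →* (G × G) ⋊[swapAction G] Multiplicative (ZMod 2))).index
      = S.index * 2 := by
  rw [Subgroup.index_map_of_injective _ inl_injective, index_range_inl]

end Aux

open SemidirectProduct in
/-- For a nontrivial finite group G,
J((G × G) ⋊ ℤ/2ℤ) = 2 · J(G)², where ℤ/2ℤ swaps the two factors. -/
theorem jordanConstant_wreath (G : Type*) [Group G] [Finite G] [Nontrivial G] :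
    jordanConstant ((G × G) ⋊[swapAction G] Multiplicative (ZMod 2)) =
      2 * (jordanConstant G) ^ 2 := by
  haveI : Finite ((G × G) ⋊[swapAction G] Multiplicative (ZMod 2)) := sdp_finite _
  apply le_antisymm
  · -- upper bound
    obtain ⟨A, hAn, hAc, hAi⟩ := jordan_mem G
    haveI := hAn
    have hSn : ((A.prod A).map
        (inl : (G × G) →* (G × G) ⋊[swapAction G] Multiplicative (ZMod 2))).Normal := by
      constructor
      intro n hn w
      obtain ⟨x, hx, rfl⟩ := hn
      rw [sdp_conj]
      refine ⟨w.left * (swapAction G) w.right x * w.left⁻¹, ?_, rfl⟩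
      have hmem : (swapAction G) w.right x ∈ A.prod A := by
        rcases swapAction_cases G w.right x with h | h <;> rw [h]
        · exact hx
        · exact ⟨hx.2, hx.1⟩
      exact (A.prod_normal A).conj_mem _ hmem _
    haveI := prod_isComm A A hAc hAc
    have hSc : IsMulCommutative ((A.prod A).map
        (inl : (G × G) →* (G × G) ⋊[swapAction G] Multiplicative (ZMod 2))) :=
      inferInstance
    have h := jordan_le _ hSn hSc
    rwa [index_map_inl, Subgroup.index_prod, hAi, show
      jordanConstant G * jordanConstant G * 2 = 2 * jordanConstant G ^ 2 by ring] at h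
  · -- lower bound
    obtain ⟨B, hBn, hBc, hBi⟩ := jordan_mem ((G × G) ⋊[swapAction G] Multiplicative (ZMod 2))
    rw [← hBi]
    by_cases hsub : B ≤ (inl : (G × G) →* (G × G) ⋊[swapAction G] Multiplicative (ZMod 2)).range
    · -- B is contained in the base group
      set B' := B.comap (inl : (G × G) →* (G × G) ⋊[swapAction G] Multiplicative (ZMod 2))
        with hB'def
      have hmap : B'.map inl = B := by
        rw [Subgroup.map_comap_eq, inf_eq_right.mpr hsub]
      have hidx : B.index = B'.index * 2 := by rw [← hmap, index_map_inl]
      haveI := hBc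
      haveI hB'c : IsMulCommutative B' := Subgroup.comap_injective_isMulCommutative (H := B) inl_injective
      have hB'n : B'.Normal := hBn.comap _
      have hN1n : (B'.map (MonoidHom.fst G G)).Normal :=
        hB'n.map _ (fun c => ⟨(c, 1), rfl⟩)
      have hN2n : (B'.map (MonoidHom.snd G G)).Normal :=
        hB'n.map _ (fun c => ⟨(1, c), rfl⟩)
      have h1 : jordanConstant G ≤ (B'.map (MonoidHom.fst G G)).index :=
        jordan_le _ hN1n inferInstance
      have h2 : jordanConstant G ≤ (B'.map (MonoidHom.snd G G)).index :=
        jordan_le _ hN2n inferInstance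
      have hle : B' ≤ (B'.map (MonoidHom.fst G G)).prod (B'.map (MonoidHom.snd G G)) :=
        fun x hx => ⟨⟨x, hx, rfl⟩, ⟨x, hx, rfl⟩⟩
      have h3 : ((B'.map (MonoidHom.fst G G)).prod (B'.map (MonoidHom.snd G G))).index
          ≤ B'.index :=
        Nat.le_of_dvd (Nat.pos_of_ne_zero B'.index_ne_zero_of_finite)
          (Subgroup.index_dvd_of_le hle)
      rw [Subgroup.index_prod] at h3
      have h4 : jordanConstant G * jordanConstant G ≤ B'.index :=
        le_trans (Nat.mul_le_mul h1 h2) h3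
      rw [hidx]
      nlinarith [sq_nonneg (jordanConstant G)]
    · -- B contains an element outside the base group
      rw [SetLike.not_le_iff_exists] at hsub
      obtain ⟨t, htB, htr⟩ := hsub
      have htr1 : t.right ≠ 1 := by
        intro h
        exact htr (by rw [range_inl_eq_ker_rightHom]; exact h)
      have hφ : swapAction G t.right = swapAut G := swapAction_ne G _ htr1
      haveI := hBc
      -- every element of G squares to 1
      have key : ∀ a : G, a * a = 1 := by
        intro a
        have hc1 : (inl (a, 1) * t * (inl (a, 1))⁻¹ :
            (G × G) ⋊[swapAction G] Multiplicative (ZMod 2)) ∈ B :=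
          hBn.conj_mem t htB _
        have hcomm := B.mul_comm_of_mem_isMulCommutative htB hc1
        have h2 := congrArg (fun w : (G × G) ⋊[swapAction G] Multiplicative (ZMod 2) =>
          w.left.2) hcomm
        simp [hφ, swapAut, mul_assoc] at h2
        exact mul_eq_one_iff_eq_inv.mpr h2
      have hGc : ∀ a b : G, a * b = b * a := by
        intro a b
        have h3 := key (a * b)
        have : a * b = (a * b)⁻¹ := by
          rw [eq_inv_iff_mul_eq_one]; exact h3
        rw [this, mul_inv_rev, inv_eq_of_mul_eq_one_right (key b),
          inv_eq_of_mul_eq_one_right (key a)]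
      have hJ1 : jordanConstant G = 1 := by
        refine le_antisymm ?_ (jordan_pos G)
        have := jordan_le (⊤ : Subgroup G) inferInstance
          ⟨⟨fun x y => Subtype.ext (hGc x y)⟩⟩
        rwa [Subgroup.index_top] at this
      rw [hJ1]
      have hBne : B ≠ ⊤ := by
        intro h
        obtain ⟨g0, hg0⟩ := exists_ne (1 : G)
        have hcomm := B.mul_comm_of_mem_isMulCommutative
          (h ▸ Subgroup.mem_top (inl (g0, 1)))
          (h ▸ Subgroup.mem_top (⟨1, Multiplicative.ofAdd 1⟩ :
            (G × G) ⋊[swapAction G] Multiplicative (ZMod 2)))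
        have h2 := congrArg (fun w : (G × G) ⋊[swapAction G] Multiplicative (ZMod 2) =>
          w.left.1) hcomm
        rw [mul_left, mul_left] at h2
        simp only [left_inl, left_inr, right_inl, right_inr] at h2
        simp [swapAction, swapAut, ZMod.val_one] at h2
        exact hg0 h2
      have hne1 : B.index ≠ 1 := fun h => hBne (Subgroup.index_eq_one.mp h)
      have hne0 : B.index ≠ 0 := B.index_ne_zero_of_finite
      omega
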